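/- Let M, N be natural numbers with M ≤ N, let a_1,…,a_M > 0 and b_0, b_1,…,b_N > 0 be real numbers, set K(t) = e^{−b_0 t} ∏_{j=1}^N (1 − e^{−b_j t}) / ∏_{i=1}^M (1 − e^{−a_i t}) for t > 0, and define η(q) = exp( ∫_0^∞ (e^{−tq} − 1) K(t) dt/t ) for real q > −b_0. Then: (i) if M < N, then η(q) tends to exp( − ∫_0^∞ K(t) dt/t ) as q → +∞ along the reals; (ii) if M = N, then there is a constant C > 0 such that | log η(q) + (b_1 ⋯ b_N)/(a_1 ⋯ a_N) · log q | ≤ C for all real q ≥ 1. -/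

import Mathlib

open MeasureTheory Real Filter Set

private lemma one_sub_exp_le' {x : ℝ} (hx : 0 ≤ x) : 1 - Real.exp (-x) ≤ x := by
  nlinarith [Real.add_one_le_exp (-x)]

private lemma one_sub_exp_pos' {x : ℝ} (hx : 0 < x) : 0 < 1 - Real.exp (-x) := by
  have : Real.exp (-x) < 1 := by rw [Real.exp_lt_one_iff]; linarith
  linarith

private lemma prodPos' (s : Finset ℕ) (c : ℕ → ℝ) (hc : ∀ i ∈ s, 0 < c i) {t : ℝ} (ht : 0 < t) :
    0 < ∏ i ∈ s, (1 - Real.exp (-c i * t)) :=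
  Finset.prod_pos fun i hi => by
    simpa [neg_mul] using one_sub_exp_pos' (mul_pos (hc i hi) ht)

private lemma prodUB' (s : Finset ℕ) (c : ℕ → ℝ) (hc : ∀ i ∈ s, 0 < c i) {t : ℝ} (ht : 0 < t) :
    ∏ i ∈ s, (1 - Real.exp (-c i * t)) ≤ (∏ i ∈ s, c i) * t ^ s.card := by
  calc ∏ i ∈ s, (1 - Real.exp (-c i * t)) ≤ ∏ i ∈ s, (c i * t) := by
        apply Finset.prod_le_prod
        · intro i hi
          exact le_of_lt (by simpa [neg_mul] using one_sub_exp_pos' (mul_pos (hc i hi) ht))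
        · intro i hi
          simpa [neg_mul] using one_sub_exp_le' (le_of_lt (mul_pos (hc i hi) ht))
    _ = (∏ i ∈ s, c i) * t ^ s.card := by
        rw [Finset.prod_mul_distrib, Finset.prod_const]

private lemma exp_sub_one_le' {y : ℝ} (hy : 0 ≤ y) : Real.exp y - 1 ≤ y * Real.exp y := by
  have h := one_sub_exp_le' hy
  have h2 : Real.exp y * Real.exp (-y) = 1 := by rw [← Real.exp_add]; simp
  nlinarith [Real.exp_pos y]

private lemma le_one_sub_exp' {x : ℝ} (hx : 0 ≤ x) : x * Real.exp (-x) ≤ 1 - Real.exp (-x) := by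
  have h := Real.add_one_le_exp x
  have h2 : Real.exp x * Real.exp (-x) = 1 := by rw [← Real.exp_add]; simp
  nlinarith [Real.exp_pos (-x)]

private lemma prodLB' (s : Finset ℕ) (c : ℕ → ℝ) (hc : ∀ i ∈ s, 0 < c i) {t : ℝ} (ht : 0 < t) :
    (∏ i ∈ s, c i) * t ^ s.card * Real.exp (-(∑ i ∈ s, c i) * t)
      ≤ ∏ i ∈ s, (1 - Real.exp (-c i * t)) := by
  have key : (∏ i ∈ s, c i) * t ^ s.card * Real.exp (-(∑ i ∈ s, c i) * t)
      = ∏ i ∈ s, (c i * t * Real.exp (-c i * t)) := by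
    have hs : (∑ i ∈ s, (-c i * t)) = -(∑ i ∈ s, c i) * t := by
      rw [← Finset.sum_mul, Finset.sum_neg_distrib]
    rw [Finset.prod_mul_distrib, Finset.prod_mul_distrib, Finset.prod_const, ← Real.exp_sum, hs]
  rw [key]
  apply Finset.prod_le_prod
  · intro i hi
    exact le_of_lt (mul_pos (mul_pos (hc i hi) ht) (Real.exp_pos _))
  · intro i hi
    simpa [neg_mul] using le_one_sub_exp' (le_of_lt (mul_pos (hc i hi) ht))

section Kbounds
variable (M N : ℕ) (a b : ℕ → ℝ) (K : ℝ → ℝ)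

private lemma Kpos' (hMN : M ≤ N)
    (ha : ∀ i ∈ Finset.Icc 1 M, 0 < a i)
    (hb : ∀ j ∈ Finset.Icc 0 N, 0 < b j)
    (hK : ∀ t : ℝ, K t = Real.exp (-(b 0) * t) *
      (∏ j ∈ Finset.Icc 1 N, (1 - Real.exp (-(b j) * t))) /
      ∏ i ∈ Finset.Icc 1 M, (1 - Real.exp (-(a i) * t)))
    {t : ℝ} (ht : 0 < t) : 0 < K t := by
  rw [hK t]
  have hb' : ∀ j ∈ Finset.Icc 1 N, 0 < b j := fun j hj =>
    hb j (Finset.mem_Icc.2 ⟨Nat.zero_le _, (Finset.mem_Icc.1 hj).2⟩)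
  exact div_pos (mul_pos (Real.exp_pos _) (prodPos' _ b hb' ht)) (prodPos' _ a ha ht)

private lemma Kub' (hMN : M ≤ N)
    (ha : ∀ i ∈ Finset.Icc 1 M, 0 < a i)
    (hb : ∀ j ∈ Finset.Icc 0 N, 0 < b j)
    (hK : ∀ t : ℝ, K t = Real.exp (-(b 0) * t) *
      (∏ j ∈ Finset.Icc 1 N, (1 - Real.exp (-(b j) * t))) /
      ∏ i ∈ Finset.Icc 1 M, (1 - Real.exp (-(a i) * t)))
    {t : ℝ} (ht : 0 < t) :
    K t ≤ (∏ j ∈ Finset.Icc 1 N, b j) / (∏ i ∈ Finset.Icc 1 M, a i) * t ^ (N - M)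
      * Real.exp ((∑ i ∈ Finset.Icc 1 M, a i) * t) := by
  have hb' : ∀ j ∈ Finset.Icc 1 N, 0 < b j := fun j hj =>
    hb j (Finset.mem_Icc.2 ⟨Nat.zero_le _, (Finset.mem_Icc.1 hj).2⟩)
  have hpb : 0 < ∏ j ∈ Finset.Icc 1 N, b j := Finset.prod_pos hb'
  have hpa : 0 < ∏ i ∈ Finset.Icc 1 M, a i := Finset.prod_pos ha
  have hcardb : (Finset.Icc 1 N).card = N := by simp [Nat.card_Icc]
  have hcarda : (Finset.Icc 1 M).card = M := by simp [Nat.card_Icc]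
  have hnum : Real.exp (-(b 0) * t) * ∏ j ∈ Finset.Icc 1 N, (1 - Real.exp (-(b j) * t))
      ≤ (∏ j ∈ Finset.Icc 1 N, b j) * t ^ N := by
    have h1 := prodUB' (Finset.Icc 1 N) b hb' ht
    rw [hcardb] at h1
    have he : Real.exp (-(b 0) * t) ≤ 1 := by
      rw [Real.exp_le_one_iff]
      have := hb 0 (Finset.mem_Icc.2 ⟨le_rfl, Nat.zero_le _⟩)
      nlinarith
    have hpbn : 0 < ∏ j ∈ Finset.Icc 1 N, (1 - Real.exp (-(b j) * t)) := prodPos' _ b hb' ht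
    nlinarith
  have hden := prodLB' (Finset.Icc 1 M) a ha ht
  rw [hcarda] at hden
  have hdenpos : 0 < (∏ i ∈ Finset.Icc 1 M, a i) * t ^ M
      * Real.exp (-(∑ i ∈ Finset.Icc 1 M, a i) * t) :=
    mul_pos (mul_pos hpa (pow_pos ht _)) (Real.exp_pos _)
  rw [hK t]
  calc Real.exp (-(b 0) * t) * (∏ j ∈ Finset.Icc 1 N, (1 - Real.exp (-(b j) * t))) /
        ∏ i ∈ Finset.Icc 1 M, (1 - Real.exp (-(a i) * t))
      ≤ ((∏ j ∈ Finset.Icc 1 N, b j) * t ^ N) /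
        ((∏ i ∈ Finset.Icc 1 M, a i) * t ^ M * Real.exp (-(∑ i ∈ Finset.Icc 1 M, a i) * t)) :=
        div_le_div₀ (by positivity) hnum hdenpos hden
    _ = (∏ j ∈ Finset.Icc 1 N, b j) / (∏ i ∈ Finset.Icc 1 M, a i) * t ^ (N - M)
      * Real.exp ((∑ i ∈ Finset.Icc 1 M, a i) * t) := by
        have htN : t ^ N = t ^ (N - M) * t ^ M := by rw [← pow_add, Nat.sub_add_cancel hMN]
        rw [htN, neg_mul, Real.exp_neg]
        field_simp

private lemma Klb' (hMN : M ≤ N)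
    (ha : ∀ i ∈ Finset.Icc 1 M, 0 < a i)
    (hb : ∀ j ∈ Finset.Icc 0 N, 0 < b j)
    (hK : ∀ t : ℝ, K t = Real.exp (-(b 0) * t) *
      (∏ j ∈ Finset.Icc 1 N, (1 - Real.exp (-(b j) * t))) /
      ∏ i ∈ Finset.Icc 1 M, (1 - Real.exp (-(a i) * t)))
    {t : ℝ} (ht : 0 < t) :
    (∏ j ∈ Finset.Icc 1 N, b j) / (∏ i ∈ Finset.Icc 1 M, a i) * t ^ (N - M)
      * Real.exp (-(b 0 + ∑ j ∈ Finset.Icc 1 N, b j) * t) ≤ K t := by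
  have hb' : ∀ j ∈ Finset.Icc 1 N, 0 < b j := fun j hj =>
    hb j (Finset.mem_Icc.2 ⟨Nat.zero_le _, (Finset.mem_Icc.1 hj).2⟩)
  have hpb : 0 < ∏ j ∈ Finset.Icc 1 N, b j := Finset.prod_pos hb'
  have hpa : 0 < ∏ i ∈ Finset.Icc 1 M, a i := Finset.prod_pos ha
  have hcardb : (Finset.Icc 1 N).card = N := by simp [Nat.card_Icc]
  have hcarda : (Finset.Icc 1 M).card = M := by simp [Nat.card_Icc]
  have hnum : Real.exp (-(b 0) * t) * ((∏ j ∈ Finset.Icc 1 N, b j) * t ^ N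
        * Real.exp (-(∑ j ∈ Finset.Icc 1 N, b j) * t))
      ≤ Real.exp (-(b 0) * t) * ∏ j ∈ Finset.Icc 1 N, (1 - Real.exp (-(b j) * t)) := by
    have h1 := prodLB' (Finset.Icc 1 N) b hb' ht
    rw [hcardb] at h1
    exact mul_le_mul_of_nonneg_left h1 (le_of_lt (Real.exp_pos _))
  have hden := prodUB' (Finset.Icc 1 M) a ha ht
  rw [hcarda] at hden
  have hdenpos : 0 < ∏ i ∈ Finset.Icc 1 M, (1 - Real.exp (-(a i) * t)) := prodPos' _ a ha ht
  rw [hK t]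
  calc (∏ j ∈ Finset.Icc 1 N, b j) / (∏ i ∈ Finset.Icc 1 M, a i) * t ^ (N - M)
        * Real.exp (-(b 0 + ∑ j ∈ Finset.Icc 1 N, b j) * t)
      = (Real.exp (-(b 0) * t) * ((∏ j ∈ Finset.Icc 1 N, b j) * t ^ N
          * Real.exp (-(∑ j ∈ Finset.Icc 1 N, b j) * t))) /
        ((∏ i ∈ Finset.Icc 1 M, a i) * t ^ M) := by
        have htN : t ^ N = t ^ (N - M) * t ^ M := by rw [← pow_add, Nat.sub_add_cancel hMN]
        have hexp : Real.exp (-(b 0 + ∑ j ∈ Finset.Icc 1 N, b j) * t)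
            = Real.exp (-(b 0) * t) * Real.exp (-(∑ j ∈ Finset.Icc 1 N, b j) * t) := by
          rw [← Real.exp_add]; ring_nf
        rw [htN, hexp]
        field_simp
    _ ≤ (Real.exp (-(b 0) * t) * ∏ j ∈ Finset.Icc 1 N, (1 - Real.exp (-(b j) * t))) /
        ∏ i ∈ Finset.Icc 1 M, (1 - Real.exp (-(a i) * t)) := by
        exact div_le_div₀
          (le_of_lt (mul_pos (Real.exp_pos _) (prodPos' _ b hb' ht))) hnum hdenpos hden

end Kbounds

private lemma Ktail' (M N : ℕ) (a b : ℕ → ℝ) (K : ℝ → ℝ)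
    (ha : ∀ i ∈ Finset.Icc 1 M, 0 < a i)
    (hb : ∀ j ∈ Finset.Icc 0 N, 0 < b j)
    (hK : ∀ t : ℝ, K t = Real.exp (-(b 0) * t) *
      (∏ j ∈ Finset.Icc 1 N, (1 - Real.exp (-(b j) * t))) /
      ∏ i ∈ Finset.Icc 1 M, (1 - Real.exp (-(a i) * t)))
    {t : ℝ} (ht : 1 ≤ t) :
    K t ≤ (∏ i ∈ Finset.Icc 1 M, (1 - Real.exp (-(a i) * 1)))⁻¹ * Real.exp (-(b 0) * t) := by
  have ht0 : (0:ℝ) < t := lt_of_lt_of_le one_pos ht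
  have hb' : ∀ j ∈ Finset.Icc 1 N, 0 < b j := fun j hj =>
    hb j (Finset.mem_Icc.2 ⟨Nat.zero_le _, (Finset.mem_Icc.1 hj).2⟩)
  have hP1 : 0 < ∏ i ∈ Finset.Icc 1 M, (1 - Real.exp (-(a i) * 1)) :=
    prodPos' _ a ha one_pos
  have hnum : Real.exp (-(b 0) * t) * ∏ j ∈ Finset.Icc 1 N, (1 - Real.exp (-(b j) * t))
      ≤ Real.exp (-(b 0) * t) * 1 := by
    apply mul_le_mul_of_nonneg_left _ (le_of_lt (Real.exp_pos _))
    apply Finset.prod_le_one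
    · intro j hj
      exact le_of_lt (by simpa [neg_mul] using one_sub_exp_pos' (mul_pos (hb' j hj) ht0))
    · intro j hj
      have : 0 < Real.exp (-(b j) * t) := Real.exp_pos _
      linarith
  have hden : ∏ i ∈ Finset.Icc 1 M, (1 - Real.exp (-(a i) * 1))
      ≤ ∏ i ∈ Finset.Icc 1 M, (1 - Real.exp (-(a i) * t)) := by
    apply Finset.prod_le_prod
    · intro i hi
      exact le_of_lt (by simpa [neg_mul] using one_sub_exp_pos' (mul_pos (ha i hi) one_pos))
    · intro i hi
      have : Real.exp (-(a i) * t) ≤ Real.exp (-(a i) * 1) := by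
        apply Real.exp_le_exp.2
        nlinarith [ha i hi]
      linarith
  rw [hK t]
  calc Real.exp (-(b 0) * t) * (∏ j ∈ Finset.Icc 1 N, (1 - Real.exp (-(b j) * t))) /
        ∏ i ∈ Finset.Icc 1 M, (1 - Real.exp (-(a i) * t))
      ≤ (Real.exp (-(b 0) * t) * 1) / (∏ i ∈ Finset.Icc 1 M, (1 - Real.exp (-(a i) * 1))) :=
        div_le_div₀ (by positivity) hnum hP1 hden
    _ = (∏ i ∈ Finset.Icc 1 M, (1 - Real.exp (-(a i) * 1)))⁻¹ * Real.exp (-(b 0) * t) := by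
        rw [mul_one, div_eq_mul_inv, mul_comm]

private lemma Kmeas' (M N : ℕ) (a b : ℕ → ℝ) (K : ℝ → ℝ)
    (hK : ∀ t : ℝ, K t = Real.exp (-(b 0) * t) *
      (∏ j ∈ Finset.Icc 1 N, (1 - Real.exp (-(b j) * t))) /
      ∏ i ∈ Finset.Icc 1 M, (1 - Real.exp (-(a i) * t))) :
    Measurable K := by
  have hKeq : K = fun t => Real.exp (-(b 0) * t) *
      (∏ j ∈ Finset.Icc 1 N, (1 - Real.exp (-(b j) * t))) /
      ∏ i ∈ Finset.Icc 1 M, (1 - Real.exp (-(a i) * t)) := funext hK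
  rw [hKeq]
  have hcont : ∀ (s : Finset ℕ) (c : ℕ → ℝ),
      Continuous fun t : ℝ => ∏ i ∈ s, (1 - Real.exp (-(c i) * t)) := by
    intro s c
    apply continuous_finset_prod
    intro i _
    exact continuous_const.sub (Real.continuous_exp.comp (continuous_const.mul continuous_id))
  exact (((Real.continuous_exp.comp (continuous_const.mul continuous_id)).mul
    (hcont _ b)).measurable).div ((hcont _ a).measurable)

set_option maxHeartbeats 1000000 in
/-- asymptotics of the Mellin transform
`η(q) = exp(∫_0^∞ (e^{−tq} − 1) K(t) dt/t)` of the Barnes beta distribution `β_{M,N}(a,b)`: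
(i) if `M < N`, `η(q) → exp(−∫_0^∞ K(t) dt/t)` as `q → +∞`;
(ii) if `M = N`, `|log η(q) + (b_1⋯b_N)/(a_1⋯a_N) log q| ≤ C` for all `q ≥ 1`. -/
theorem stmt5 (M N : ℕ) (hMN : M ≤ N) (a b : ℕ → ℝ)
    (ha : ∀ i ∈ Finset.Icc 1 M, 0 < a i)
    (hb : ∀ j ∈ Finset.Icc 0 N, 0 < b j)
    (K : ℝ → ℝ)
    (hK : ∀ t : ℝ, K t = Real.exp (-(b 0) * t) *
      (∏ j ∈ Finset.Icc 1 N, (1 - Real.exp (-(b j) * t))) /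
      ∏ i ∈ Finset.Icc 1 M, (1 - Real.exp (-(a i) * t)))
    (η : ℝ → ℝ)
    (hη : ∀ q : ℝ, η q =
      Real.exp (∫ t in Set.Ioi (0:ℝ), (Real.exp (-t * q) - 1) * K t / t)) :
    (M < N → Filter.Tendsto η Filter.atTop
      (nhds (Real.exp (-(∫ t in Set.Ioi (0:ℝ), K t / t))))) ∧
    (M = N → ∃ C : ℝ, 0 < C ∧ ∀ q : ℝ, 1 ≤ q →
      |Real.log (η q) +
        (∏ j ∈ Finset.Icc 1 N, b j) / (∏ i ∈ Finset.Icc 1 M, a i) * Real.log q| ≤ C) := by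
  have hb0 : 0 < b 0 := hb 0 (Finset.mem_Icc.2 ⟨le_rfl, Nat.zero_le _⟩)
  have hb' : ∀ j ∈ Finset.Icc 1 N, 0 < b j := fun j hj =>
    hb j (Finset.mem_Icc.2 ⟨Nat.zero_le _, (Finset.mem_Icc.1 hj).2⟩)
  have hpa : 0 < ∏ i ∈ Finset.Icc 1 M, a i := Finset.prod_pos ha
  have hpb : 0 < ∏ j ∈ Finset.Icc 1 N, b j := Finset.prod_pos hb'
  set ρ : ℝ := (∏ j ∈ Finset.Icc 1 N, b j) / (∏ i ∈ Finset.Icc 1 M, a i) with hρdef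
  have hρ : 0 < ρ := div_pos hpb hpa
  set A : ℝ := ∑ i ∈ Finset.Icc 1 M, a i with hAdef
  have hA0 : 0 ≤ A := Finset.sum_nonneg fun i hi => (ha i hi).le
  set S : ℝ := b 0 + ∑ j ∈ Finset.Icc 1 N, b j with hSdef
  have hS0 : 0 ≤ S := add_nonneg hb0.le (Finset.sum_nonneg fun j hj => (hb' j hj).le)
  set E : ℝ := (∏ i ∈ Finset.Icc 1 M, (1 - Real.exp (-(a i) * 1)))⁻¹ with hEdef
  have hE0 : 0 < E := inv_pos.2 (prodPos' _ a ha one_pos)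
  have hKpos : ∀ t : ℝ, 0 < t → 0 < K t := fun t ht => Kpos' M N a b K hMN ha hb hK ht
  have hKub : ∀ t : ℝ, 0 < t → K t ≤ ρ * t ^ (N - M) * Real.exp (A * t) :=
    fun t ht => Kub' M N a b K hMN ha hb hK ht
  have hKlb : ∀ t : ℝ, 0 < t → ρ * t ^ (N - M) * Real.exp (-S * t) ≤ K t :=
    fun t ht => Klb' M N a b K hMN ha hb hK ht
  have hKtail : ∀ t : ℝ, 1 ≤ t → K t ≤ E * Real.exp (-(b 0) * t) :=
    fun t ht => Ktail' M N a b K ha hb hK ht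
  have hKm : Measurable K := Kmeas' M N a b K hK
  have hFm : ∀ q : ℝ, Measurable (fun t : ℝ => (Real.exp (-t * q) - 1) * K t / t) := fun q =>
    (((Real.measurable_exp.comp (measurable_id.neg.mul_const q)).sub
      measurable_const).mul hKm).div measurable_id
  have hexp_le1 : ∀ q : ℝ, 0 ≤ q → ∀ t : ℝ, 0 < t → Real.exp (-t * q) ≤ 1 := by
    intro q hq t ht
    rw [Real.exp_le_one_iff]
    nlinarith
  have habs : ∀ q : ℝ, 0 ≤ q → ∀ t : ℝ, 0 < t →
      |(Real.exp (-t * q) - 1) * K t / t| = (1 - Real.exp (-t * q)) * K t / t := by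
    intro q hq t ht
    rw [abs_div, abs_mul, abs_of_pos ht, abs_of_pos (hKpos t ht), abs_sub_comm,
      abs_of_nonneg (by linarith [hexp_le1 q hq t ht])]
  have hexp_le : ∀ q : ℝ, 0 ≤ q → ∀ t : ℝ, 0 < t → 1 - Real.exp (-t * q) ≤ t * q := by
    intro q hq t ht
    simpa [neg_mul] using one_sub_exp_le' (mul_nonneg ht.le hq)
  have hK01 : ∀ t : ℝ, 0 < t → t ≤ 1 → K t ≤ ρ * Real.exp A * t ^ (N - M) := by
    intro t ht ht1
    have h1 := hKub t ht
    have h2 : Real.exp (A * t) ≤ Real.exp A := Real.exp_le_exp.2 (by nlinarith)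
    have h3 : (0:ℝ) ≤ t ^ (N - M) := (pow_pos ht _).le
    calc K t ≤ ρ * t ^ (N - M) * Real.exp (A * t) := h1
      _ ≤ ρ * t ^ (N - M) * Real.exp A := mul_le_mul_of_nonneg_left h2 (mul_nonneg hρ.le h3)
      _ = ρ * Real.exp A * t ^ (N - M) := by ring
  have hK1 : ∀ t : ℝ, 0 < t → t ≤ 1 → K t ≤ ρ * Real.exp A := by
    intro t ht ht1
    have h1 := hK01 t ht ht1
    have h2 : t ^ (N - M) ≤ 1 := pow_le_one₀ ht.le ht1
    nlinarith [mul_pos hρ (Real.exp_pos A)]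
  have htail_int : IntegrableOn (fun t : ℝ => E * Real.exp (-(b 0) * t)) (Ioi 1) :=
    (exp_neg_integrableOn_Ioi 1 hb0).const_mul E
  have hFtail : ∀ q : ℝ, 0 ≤ q → ∀ t : ℝ, 1 ≤ t →
      |(Real.exp (-t * q) - 1) * K t / t| ≤ E * Real.exp (-(b 0) * t) := by
    intro q hq t ht
    have ht0 : (0:ℝ) < t := lt_of_lt_of_le one_pos ht
    rw [habs q hq t ht0]
    have h1 : (1 - Real.exp (-t * q)) * K t ≤ 1 * K t :=
      mul_le_mul_of_nonneg_right (by nlinarith [Real.exp_pos (-t * q)]) (hKpos t ht0).le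
    calc (1 - Real.exp (-t * q)) * K t / t ≤ 1 * K t / t := by
          exact div_le_div_of_nonneg_right h1 ht0.le
        _ = K t / t := by rw [one_mul]
        _ ≤ K t := div_le_self (hKpos t ht0).le ht
        _ ≤ E * Real.exp (-(b 0) * t) := hKtail t ht
  have hFint : ∀ q : ℝ, 0 ≤ q →
      IntegrableOn (fun t : ℝ => (Real.exp (-t * q) - 1) * K t / t) (Ioi 0) := by
    intro q hq
    have hsplit : Ioi (0:ℝ) = Ioc 0 1 ∪ Ioi 1 := (Ioc_union_Ioi_eq_Ioi zero_le_one).symm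
    rw [hsplit]
    apply IntegrableOn.union
    · apply Measure.integrableOn_of_bounded (M := q * (ρ * Real.exp A))
        (by simp [Real.volume_Ioc]) (hFm q).aestronglyMeasurable
      rw [ae_restrict_iff' measurableSet_Ioc]
      apply ae_of_all
      intro t ht
      have ht0 := ht.1
      rw [Real.norm_eq_abs, habs q hq t ht0]
      calc (1 - Real.exp (-t * q)) * K t / t ≤ (t * q) * K t / t :=
            div_le_div_of_nonneg_right
              (mul_le_mul_of_nonneg_right (hexp_le q hq t ht0) (hKpos t ht0).le) ht0.le
        _ = q * K t := by
              rw [mul_comm t q, mul_assoc, mul_div_assoc, mul_div_cancel_left₀ _ ht0.ne']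
        _ ≤ q * (ρ * Real.exp A) := mul_le_mul_of_nonneg_left (hK1 t ht0 ht.2) hq
    · exact Integrable.mono htail_int (hFm q).aestronglyMeasurable
        ((ae_restrict_iff' measurableSet_Ioi).2 (ae_of_all _ fun t ht => by
          rw [Real.norm_eq_abs, Real.norm_eq_abs,
            abs_of_pos (mul_pos hE0 (Real.exp_pos _))]
          exact hFtail q hq t (le_of_lt ht)))
  constructor
  · intro hlt
    have hk1 : 1 ≤ N - M := by omega
    have hKlin : ∀ t : ℝ, 0 < t → t ≤ 1 → K t ≤ ρ * Real.exp A * t := by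
      intro t ht ht1
      have h1 := hK01 t ht ht1
      have hp : t ^ (N - M) ≤ t := by
        calc t ^ (N - M) ≤ t ^ 1 := pow_le_pow_of_le_one ht.le ht1 hk1
          _ = t := pow_one t
      calc K t ≤ ρ * Real.exp A * t ^ (N - M) := h1
        _ ≤ ρ * Real.exp A * t := mul_le_mul_of_nonneg_left hp
            (mul_nonneg hρ.le (Real.exp_pos A).le)
    have hGint : IntegrableOn (fun t : ℝ => K t / t) (Ioi 0) := by
      have hsplit : Ioi (0:ℝ) = Ioc 0 1 ∪ Ioi 1 := (Ioc_union_Ioi_eq_Ioi zero_le_one).symm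
      rw [hsplit]
      apply IntegrableOn.union
      · apply Measure.integrableOn_of_bounded (M := ρ * Real.exp A)
          (by simp [Real.volume_Ioc]) (hKm.div measurable_id').aestronglyMeasurable
        rw [ae_restrict_iff' measurableSet_Ioc]
        apply ae_of_all
        intro t ht
        have ht0 := ht.1
        rw [Real.norm_eq_abs]
        show |K t / t| ≤ ρ * Real.exp A
        rw [abs_div, abs_of_pos ht0, abs_of_pos (hKpos t ht0)]
        calc K t / t ≤ (ρ * Real.exp A * t) / t :=
              div_le_div_of_nonneg_right (hKlin t ht0 ht.2) ht0.le
          _ = ρ * Real.exp A := by field_simp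
      · exact Integrable.mono htail_int (hKm.div measurable_id').aestronglyMeasurable
          ((ae_restrict_iff' measurableSet_Ioi).2 (ae_of_all _ fun t ht => by
            have ht0 : (0:ℝ) < t := lt_trans one_pos ht
            rw [Real.norm_eq_abs, Real.norm_eq_abs]
            show |K t / t| ≤ |E * Real.exp (-(b 0) * t)|
            rw [abs_div, abs_of_pos ht0,
              abs_of_pos (hKpos t ht0), abs_of_pos (mul_pos hE0 (Real.exp_pos _))]
            calc K t / t ≤ K t := div_le_self (hKpos t ht0).le (le_of_lt ht)
              _ ≤ E * Real.exp (-(b 0) * t) := hKtail t (le_of_lt ht)))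
    have hlim : ∀ᵐ t ∂(volume.restrict (Ioi (0:ℝ))),
        Tendsto (fun q : ℝ => (Real.exp (-t * q) - 1) * K t / t) atTop (nhds (-(K t / t))) := by
      rw [ae_restrict_iff' measurableSet_Ioi]
      apply ae_of_all
      intro t ht
      have h1 : Tendsto (fun q : ℝ => -t * q) atTop atBot := by
        have h0 : Tendsto (fun q : ℝ => t * q) atTop atTop :=
          Tendsto.const_mul_atTop ht tendsto_id
        have := tendsto_neg_atTop_atBot.comp h0
        simpa [Function.comp_def, neg_mul] using this
      have h2 : Tendsto (fun q : ℝ => Real.exp (-t * q)) atTop (nhds 0) :=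
        Real.tendsto_exp_atBot.comp h1
      have h3 := ((h2.sub_const 1).mul_const (K t)).div_const t
      have : (0 - 1) * K t / t = -(K t / t) := by ring
      rwa [this] at h3
    have hDCT := tendsto_integral_filter_of_dominated_convergence
      (μ := volume.restrict (Ioi (0:ℝ)))
      (F := fun (q : ℝ) (t : ℝ) => (Real.exp (-t * q) - 1) * K t / t)
      (f := fun t => -(K t / t)) (bound := fun t => K t / t)
      (Eventually.of_forall fun q => (hFm q).aestronglyMeasurable)
      (eventually_atTop.2 ⟨0, fun q hq => (ae_restrict_iff' measurableSet_Ioi).2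
        (ae_of_all _ fun t ht => by
          rw [Real.norm_eq_abs, habs q hq t ht]
          calc (1 - Real.exp (-t * q)) * K t / t ≤ 1 * K t / t :=
                div_le_div_of_nonneg_right
                  (mul_le_mul_of_nonneg_right
                    (by nlinarith [Real.exp_pos (-t * q)]) (hKpos t ht).le) ht.le
            _ = K t / t := by rw [one_mul])⟩)
      hGint hlim
    have hneg : ∫ t in Ioi (0:ℝ), -(K t / t) = -(∫ t in Ioi (0:ℝ), K t / t) :=
      MeasureTheory.integral_neg fun t => K t / t
    rw [hneg] at hDCT
    have hcomp := (Real.continuous_exp.tendsto _).comp hDCT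
    exact hcomp.congr fun q => (hη q).symm
  · intro hM
    have hNM0 : N - M = 0 := by omega
    have hKubb : ∀ t : ℝ, 0 < t → K t ≤ ρ * Real.exp (A * t) := by
      intro t ht; have h := hKub t ht; rwa [hNM0, pow_zero, mul_one] at h
    have hKlbb : ∀ t : ℝ, 0 < t → ρ * Real.exp (-S * t) ≤ K t := by
      intro t ht; have h := hKlb t ht; rwa [hNM0, pow_zero, mul_one] at h
    set L : ℝ := ρ * (A * Real.exp A + S) with hLdef
    have hL0 : 0 ≤ L :=
      mul_nonneg hρ.le (add_nonneg (mul_nonneg hA0 (Real.exp_pos A).le) hS0)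
    have hKd : ∀ t : ℝ, 0 < t → t ≤ 1 → |K t - ρ| ≤ L * t := by
      intro t ht ht1
      have hub := hKubb t ht
      have hlb := hKlbb t ht
      have h2 : Real.exp (A * t) - 1 ≤ A * t * Real.exp (A * t) :=
        exp_sub_one_le' (mul_nonneg hA0 ht.le)
      have h3 : Real.exp (A * t) ≤ Real.exp A := Real.exp_le_exp.2 (by nlinarith)
      have h4 : 1 - Real.exp (-S * t) ≤ S * t := by
        simpa [neg_mul] using one_sub_exp_le' (mul_nonneg hS0 ht.le)
      rw [abs_le]
      constructor
      · have h5 : ρ * (1 - Real.exp (-S * t)) ≤ ρ * (S * t) :=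
          mul_le_mul_of_nonneg_left h4 hρ.le
        nlinarith [mul_nonneg (mul_nonneg hρ.le (mul_nonneg hA0 (Real.exp_pos A).le)) ht.le]
      · have h5 : ρ * (Real.exp (A * t) - 1) ≤ ρ * (A * t * Real.exp (A * t)) :=
          mul_le_mul_of_nonneg_left h2 hρ.le
        have h6 : ρ * (A * t * Real.exp (A * t)) ≤ ρ * (A * t * Real.exp A) :=
          mul_le_mul_of_nonneg_left
            (mul_le_mul_of_nonneg_left h3 (mul_nonneg hA0 ht.le)) hρ.le
        nlinarith [mul_nonneg (mul_nonneg hρ.le hS0) ht.le]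
    set B1 : ℝ := ∫ t in Ioi (1:ℝ), E * Real.exp (-(b 0) * t) with hB1def
    have hB1nonneg : 0 ≤ B1 :=
      setIntegral_nonneg measurableSet_Ioi fun t _ => (mul_pos hE0 (Real.exp_pos _)).le
    refine ⟨ρ * Real.exp A + (L + ρ) + B1 + 1, by nlinarith [mul_pos hρ (Real.exp_pos A)], ?_⟩
    intro q hq
    have hq0 : (0:ℝ) < q := lt_of_lt_of_le one_pos hq
    have hqnn : (0:ℝ) ≤ q := hq0.le
    have hqinv : (0:ℝ) < 1 / q := by positivity
    have hqinv1 : 1 / q ≤ 1 := by rw [div_le_one hq0]; exact hq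
    rw [hη q, Real.log_exp]
    set F : ℝ → ℝ := fun t => (Real.exp (-t * q) - 1) * K t / t with hFdef
    have hFI : IntegrableOn F (Ioi 0) := hFint q hqnn
    have hFa : IntegrableOn F (Ioc 0 (1 / q)) := hFI.mono_set fun x hx => hx.1
    have hFb : IntegrableOn F (Ioc (1 / q) 1) := hFI.mono_set fun x hx => lt_trans hqinv hx.1
    have hFt : IntegrableOn F (Ioi 1) := hFI.mono_set fun x hx => lt_trans (one_pos : (0:ℝ) < 1) hx
    have hF01 : IntegrableOn F (Ioc 0 1) := hFI.mono_set fun x hx => hx.1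
    have e1 : ∫ t in Ioi (0:ℝ), F t = ((∫ t in Ioc (0:ℝ) (1 / q), F t)
        + ∫ t in Ioc (1 / q) (1:ℝ), F t) + ∫ t in Ioi (1:ℝ), F t := by
      have d1 : Disjoint (Ioc (0:ℝ) 1) (Ioi (1:ℝ)) := Ioc_disjoint_Ioi le_rfl
      have d2 : Disjoint (Ioc (0:ℝ) (1 / q)) (Ioc (1 / q) (1:ℝ)) :=
        (Ioc_disjoint_Ioi le_rfl).mono_right Ioc_subset_Ioi_self
      calc ∫ t in Ioi (0:ℝ), F t = ∫ t in Ioc (0:ℝ) 1 ∪ Ioi 1, F t := by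
            rw [Ioc_union_Ioi_eq_Ioi zero_le_one]
        _ = (∫ t in Ioc (0:ℝ) 1, F t) + ∫ t in Ioi (1:ℝ), F t :=
            setIntegral_union d1 measurableSet_Ioi hF01 hFt
        _ = ((∫ t in Ioc (0:ℝ) (1 / q), F t) + ∫ t in Ioc (1 / q) (1:ℝ), F t)
            + ∫ t in Ioi (1:ℝ), F t := by
            rw [show Ioc (0:ℝ) 1 = Ioc 0 (1 / q) ∪ Ioc (1 / q) 1 from
              (Ioc_union_Ioc_eq_Ioc hqinv.le hqinv1).symm,
              setIntegral_union d2 measurableSet_Ioc hFa hFb]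
    have hlog : Real.log q = ∫ t in Ioc (1 / q) (1:ℝ), 1 / t := by
      have h0 : (0:ℝ) ∉ uIcc (1 / q) 1 := notMem_uIcc_of_lt hqinv one_pos
      rw [← intervalIntegral.integral_of_le hqinv1, integral_one_div h0, one_div_one_div]
    have h1t : IntegrableOn (fun t : ℝ => ρ * (1 / t)) (Ioc (1 / q) 1) := by
      apply (ContinuousOn.integrableOn_Icc ?_).mono_set Ioc_subset_Icc_self
      exact continuousOn_const.mul (continuousOn_const.div continuousOn_id
        fun x hx => ne_of_gt (lt_of_lt_of_le hqinv hx.1))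
    have e2 : ρ * Real.log q = ∫ t in Ioc (1 / q) (1:ℝ), ρ * (1 / t) := by
      rw [hlog]; exact (integral_const_mul ρ _).symm
    have e3 : ∫ t in Ioc (1 / q) (1:ℝ), (F t + ρ * (1 / t))
        = (∫ t in Ioc (1 / q) (1:ℝ), F t) + ∫ t in Ioc (1 / q) (1:ℝ), ρ * (1 / t) :=
      integral_add hFb h1t
    -- bound on the first piece
    have hFsmall : ∀ t : ℝ, 0 < t → t ≤ 1 → ‖F t‖ ≤ q * (ρ * Real.exp A) := by
      intro t ht ht1
      simp only [hFdef, Real.norm_eq_abs]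
      rw [habs q hqnn t ht]
      calc (1 - Real.exp (-t * q)) * K t / t ≤ (t * q) * K t / t :=
            div_le_div_of_nonneg_right
              (mul_le_mul_of_nonneg_right (hexp_le q hqnn t ht) (hKpos t ht).le) ht.le
        _ = q * K t := by
              rw [mul_comm t q, mul_assoc, mul_div_assoc, mul_div_cancel_left₀ _ ht.ne']
        _ ≤ q * (ρ * Real.exp A) := mul_le_mul_of_nonneg_left (hK1 t ht ht1) hqnn
    have Ba : |∫ t in Ioc (0:ℝ) (1 / q), F t| ≤ ρ * Real.exp A := by
      rw [← Real.norm_eq_abs]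
      have h := norm_setIntegral_le_of_norm_le_const (μ := volume) (s := Ioc (0:ℝ) (1 / q))
        (C := q * (ρ * Real.exp A)) (by simp [Real.volume_Ioc])
        (fun t ht => hFsmall t ht.1 (le_trans ht.2 hqinv1))
      refine h.trans (le_of_eq ?_)
      rw [Real.volume_real_Ioc, sub_zero, max_eq_left hqinv.le,
        mul_comm q (ρ * Real.exp A), mul_assoc, mul_one_div, div_self hq0.ne', mul_one]
    -- bound on the middle piece
    have hexp1 : ∀ t : ℝ, 0 < t → |Real.exp (-t * q) - 1| ≤ 1 := by
      intro t ht
      rw [abs_sub_comm, abs_of_nonneg (by linarith [hexp_le1 q hqnn t ht])]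
      linarith [Real.exp_pos (-t * q)]
    have hptw : ∀ t ∈ Ioc (1 / q) (1:ℝ),
        |F t + ρ * (1 / t)| ≤ L + ρ * q * Real.exp (-q * t) := by
      intro t ht
      obtain ⟨ht1, ht2⟩ := ht
      have ht0 : 0 < t := lt_trans hqinv ht1
      have hFr : F t + ρ * (1 / t)
          = ((Real.exp (-t * q) - 1) * (K t - ρ) + ρ * Real.exp (-t * q)) / t := by
        simp only [hFdef, mul_one_div]
        rw [← add_div]
        congr 1
        ring
      rw [hFr, abs_div, abs_of_pos ht0]
      have h3 : |(Real.exp (-t * q) - 1) * (K t - ρ) + ρ * Real.exp (-t * q)|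
          ≤ L * t + ρ * Real.exp (-t * q) := by
        calc |(Real.exp (-t * q) - 1) * (K t - ρ) + ρ * Real.exp (-t * q)|
            ≤ |(Real.exp (-t * q) - 1) * (K t - ρ)| + |ρ * Real.exp (-t * q)| := abs_add_le _ _
          _ = |Real.exp (-t * q) - 1| * |K t - ρ| + ρ * Real.exp (-t * q) := by
              rw [abs_mul, abs_mul, abs_of_pos hρ, abs_of_pos (Real.exp_pos _)]
          _ ≤ 1 * (L * t) + ρ * Real.exp (-t * q) := by
              have := mul_le_mul (hexp1 t ht0) (hKd t ht0 ht2) (abs_nonneg _) zero_le_one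
              linarith
          _ = L * t + ρ * Real.exp (-t * q) := by ring
      calc |(Real.exp (-t * q) - 1) * (K t - ρ) + ρ * Real.exp (-t * q)| / t
          ≤ (L * t + ρ * Real.exp (-t * q)) / t := div_le_div_of_nonneg_right h3 ht0.le
        _ = L + ρ * Real.exp (-t * q) / t := by
              rw [add_div, mul_div_cancel_right₀ _ ht0.ne']
        _ ≤ L + ρ * q * Real.exp (-q * t) := by
            have heq : Real.exp (-t * q) = Real.exp (-q * t) := by ring_nf
            rw [heq]
            have h1q : 1 < q * t := by
              rw [div_lt_iff₀ hq0] at ht1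
              linarith [mul_comm q t]
            have : ρ * Real.exp (-q * t) / t ≤ ρ * q * Real.exp (-q * t) := by
              rw [div_le_iff₀ ht0]
              nlinarith [Real.exp_pos (-q * t), mul_pos hρ (Real.exp_pos (-q * t))]
            linarith
    have hBexp : IntegrableOn (fun t : ℝ => ρ * q * Real.exp (-q * t)) (Ioc (1 / q) 1) :=
      (continuous_const.mul (Real.continuous_exp.comp
        (continuous_const.mul continuous_id))).integrableOn_Ioc
    have hBd : IntegrableOn (fun t : ℝ => L + ρ * q * Real.exp (-q * t)) (Ioc (1 / q) 1) :=
      (continuous_const.add (continuous_const.mul (Real.continuous_exp.comp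
        (continuous_const.mul continuous_id)))).integrableOn_Ioc
    have hexpint : ∫ t in Ioc (1 / q) (1:ℝ), Real.exp (-q * t)
        = (Real.exp (-1) - Real.exp (-q)) / q := by
      rw [← intervalIntegral.integral_of_le hqinv1]
      rw [intervalIntegral.integral_comp_mul_left Real.exp (by linarith : (-q) ≠ 0)]
      rw [integral_exp, smul_eq_mul]
      rw [show -q * (1 / q) = -1 by field_simp, show -q * 1 = -q by ring]
      field_simp [hq0.ne']
      ring
    have hsplitint : ∫ t in Ioc (1 / q) (1:ℝ), (L + ρ * q * Real.exp (-q * t))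
        = L * (1 - 1 / q) + ρ * q * ((Real.exp (-1) - Real.exp (-q)) / q) := by
      rw [integral_add (integrableOn_const (C := L) measure_Ioc_lt_top.ne) hBexp,
        setIntegral_const, integral_const_mul, hexpint, Real.volume_real_Ioc, smul_eq_mul,
        max_eq_left (by linarith : (0:ℝ) ≤ 1 - 1 / q)]
      ring
    have Bb : |∫ t in Ioc (1 / q) (1:ℝ), (F t + ρ * (1 / t))| ≤ L + ρ := by
      rw [← Real.norm_eq_abs]
      refine (norm_integral_le_integral_norm _).trans ?_
      have step : ∫ t in Ioc (1 / q) (1:ℝ), ‖F t + ρ * (1 / t)‖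
          ≤ ∫ t in Ioc (1 / q) (1:ℝ), (L + ρ * q * Real.exp (-q * t)) := by
        apply setIntegral_mono_on (hFb.add h1t).norm hBd measurableSet_Ioc
        intro t ht
        rw [Real.norm_eq_abs]
        exact hptw t ht
      refine step.trans ?_
      rw [hsplitint]
      have hexpa : Real.exp (-1 : ℝ) ≤ 1 := by
        rw [Real.exp_le_one_iff]; norm_num
      have hexpb : 0 < Real.exp (-q) := Real.exp_pos _
      have : ρ * q * ((Real.exp (-1) - Real.exp (-q)) / q) = ρ * (Real.exp (-1) - Real.exp (-q)) := by
        field_simp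
      rw [this]
      nlinarith [mul_pos hρ hexpb]
    -- bound on the tail piece
    have Bt : |∫ t in Ioi (1:ℝ), F t| ≤ B1 := by
      rw [← Real.norm_eq_abs]
      refine (norm_integral_le_integral_norm _).trans ?_
      rw [hB1def]
      apply setIntegral_mono_on hFt.norm htail_int measurableSet_Ioi
      intro t ht
      rw [Real.norm_eq_abs, hFdef]
      exact hFtail q hqnn t (le_of_lt ht)
    have key : (∫ t in Ioi (0:ℝ), F t) + ρ * Real.log q
        = (∫ t in Ioc (0:ℝ) (1 / q), F t)
          + (∫ t in Ioc (1 / q) (1:ℝ), (F t + ρ * (1 / t)))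
          + ∫ t in Ioi (1:ℝ), F t := by
      rw [e1, e2, e3]; ring
    rw [key]
    have habs2 := abs_add_le ((∫ t in Ioc (0:ℝ) (1 / q), F t)
      + (∫ t in Ioc (1 / q) (1:ℝ), (F t + ρ * (1 / t)))) (∫ t in Ioi (1:ℝ), F t)
    have habs3 := abs_add_le (∫ t in Ioc (0:ℝ) (1 / q), F t)
      (∫ t in Ioc (1 / q) (1:ℝ), (F t + ρ * (1 / t)))
    linarith
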